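/- Let A be a 4×4 normal idempotent matrix with a_{32} + a_{41} < a_{31} + a_{42}, q = column 2 of A, v¹³ = (-a_{41}, -a_{42}, a_{31}-a_{41}, 0) and v²⁴ = (-a_{31}, -a_{32}, 0, a_{42}-a_{32}). Then d(q, v²⁴) < d(q, v¹³), i.e., v²⁴ is the vertex closer to q; explicitly d(q, v¹³) = f_{14} = f_{13} + f_{34} > f_{13} = d(q, v²⁴). -/

import Mathlib

/-- Normalized difference: the zero-last-coordinate representative of `p - q`. -/
noncomputable def normDiff (n : ℕ) (p q : Fin (n+1) → ℝ) : Fin (n+1) → ℝ :=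
  fun i => (p i - q i) - (p (Fin.last n) - q (Fin.last n))

/-- The tropical distance on `ℝⁿ/ℝ(1,…,1)`. -/
noncomputable def tdist (n : ℕ) (p q : Fin (n+1) → ℝ) : ℝ :=
  Finset.univ.sup' Finset.univ_nonempty
    (fun ij : Fin (n+1) × Fin (n+1) =>
      max |normDiff n p q ij.1| |normDiff n p q ij.1 - normDiff n p q ij.2|)

/-- For a 4×4 normal idempotent matrix with `a_{32}+a_{41} < a_{31}+a_{42}`,
the vertex `v²⁴` is strictly closer to `q` (column 2) than `v¹³`:
`d(q,v¹³) = f_{14} = f_{13} + f_{34} > f_{13} = d(q,v²⁴)`. -/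
theorem stmt14 (A : Matrix (Fin 4) (Fin 4) ℝ)
    (hdiag : ∀ i, A i i = 0) (hneg : ∀ i j, A i j ≤ 0)
    (hsub : ∀ i j k, A i k + A k j ≤ A i j)
    (htype : A 2 1 + A 3 0 < A 2 0 + A 3 1) :
    let f : Fin 4 → Fin 4 → ℝ := fun k l => A k 0 + A l 1 - A k 1 - A l 0
    let q : Fin 4 → ℝ := fun i => A i 1
    let v13 : Fin 4 → ℝ := ![-(A 3 0), -(A 3 1), A 2 0 - A 3 0, 0]
    let v24 : Fin 4 → ℝ := ![-(A 2 0), -(A 2 1), 0, A 3 1 - A 2 1]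
    tdist 3 q v13 = f 0 3 ∧
    f 0 3 = f 0 2 + f 2 3 ∧
    tdist 3 q v24 = f 0 2 ∧
    f 0 2 < f 0 3 ∧
    tdist 3 q v24 < tdist 3 q v13 := by
  intro f q v13 v24
  have hd0 := hdiag 0
  have hd1 := hdiag 1
  have h1 : A 3 0 + A 0 1 ≤ A 3 1 := hsub 3 1 0
  have h2 : A 2 0 + A 0 1 ≤ A 2 1 := hsub 2 1 0
  have k13 : tdist 3 q v13 = f 0 3 := by
    apply le_antisymm
    · apply Finset.sup'_le
      intro ij _
      fin_cases ij <;>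
        · simp only [normDiff, q, v13, f, show (Fin.last 3)=(3:Fin 4) from rfl, show ((⟨0,by omega⟩:Fin 4))=0 from rfl, show ((⟨1,by omega⟩:Fin 4))=1 from rfl, show ((⟨2,by omega⟩:Fin 4))=2 from rfl, show ((⟨3,by omega⟩:Fin 4))=3 from rfl, Fin.isValue, max_le_iff, abs_le]
          norm_num [Matrix.cons_val_two, Matrix.cons_val_three]
          repeat' constructor
          all_goals linarith
    · have hle : |normDiff 3 q v13 0| ≤ tdist 3 q v13 := by
        have h := Finset.le_sup' (fun ij : Fin 4 × Fin 4 =>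
            max |normDiff 3 q v13 ij.1| |normDiff 3 q v13 ij.1 - normDiff 3 q v13 ij.2|)
          (Finset.mem_univ ((0:Fin 4),(0:Fin 4)))
        exact le_trans (le_max_left _ _) h
      have e0 : normDiff 3 q v13 0 = A 0 1 + A 3 0 - A 3 1 := by
        simp [normDiff, q, v13, show (Fin.last 3)=(3:Fin 4) from rfl, show ((⟨0,by omega⟩:Fin 4))=0 from rfl, show ((⟨1,by omega⟩:Fin 4))=1 from rfl, show ((⟨2,by omega⟩:Fin 4))=2 from rfl, show ((⟨3,by omega⟩:Fin 4))=3 from rfl]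
      rw [e0, abs_of_nonpos (by linarith)] at hle
      simp only [f, Fin.isValue]
      linarith
  have k24 : tdist 3 q v24 = f 0 2 := by
    apply le_antisymm
    · apply Finset.sup'_le
      intro ij _
      fin_cases ij <;>
        · simp only [normDiff, q, v24, f, show (Fin.last 3)=(3:Fin 4) from rfl, show ((⟨0,by omega⟩:Fin 4))=0 from rfl, show ((⟨1,by omega⟩:Fin 4))=1 from rfl, show ((⟨2,by omega⟩:Fin 4))=2 from rfl, show ((⟨3,by omega⟩:Fin 4))=3 from rfl, Fin.isValue, max_le_iff, abs_le]
          norm_num [Matrix.cons_val_two, Matrix.cons_val_three]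
          repeat' constructor
          all_goals linarith
    · have hle : |normDiff 3 q v24 0| ≤ tdist 3 q v24 := by
        have h := Finset.le_sup' (fun ij : Fin 4 × Fin 4 =>
            max |normDiff 3 q v24 ij.1| |normDiff 3 q v24 ij.1 - normDiff 3 q v24 ij.2|)
          (Finset.mem_univ ((0:Fin 4),(0:Fin 4)))
        exact le_trans (le_max_left _ _) h
      have e0 : normDiff 3 q v24 0 = A 0 1 + A 2 0 - A 2 1 := by
        simp [normDiff, q, v24, show (Fin.last 3)=(3:Fin 4) from rfl, show ((⟨0,by omega⟩:Fin 4))=0 from rfl, show ((⟨1,by omega⟩:Fin 4))=1 from rfl, show ((⟨2,by omega⟩:Fin 4))=2 from rfl, show ((⟨3,by omega⟩:Fin 4))=3 from rfl]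
      rw [e0, abs_of_nonpos (by linarith)] at hle
      simp only [f, Fin.isValue]
      linarith
  refine ⟨k13, by simp only [f, Fin.isValue]; rw [hd0]; ring, k24,
    by simp only [f, Fin.isValue]; linarith,
    by rw [k13, k24]; simp only [f, Fin.isValue]; linarith⟩
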